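/- Let p be a monic real polynomial of degree n having exactly s real roots counted with multiplicity. Then there exist a symmetric tridiagonal matrix Td ∈ ℝ^{n×n} and a signature matrix J ∈ ℝ^{n×n} with sgn(J) = s such that p(x) = det(J)·det(x·J − Td). -/

import Mathlib

open Polynomial Matrix BigOperators Finset

lemma symm_cases {k m : ℕ} (i : Fin (k + m)) :
    (∃ a : Fin k, (i : ℕ) = (a : ℕ) ∧ finSumFinEquiv.symm i = Sum.inl a) ∨
    (∃ a : Fin m, (i : ℕ) = k + (a : ℕ) ∧ finSumFinEquiv.symm i = Sum.inr a) := by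
  rcases Nat.lt_or_ge (i : ℕ) k with hi | hi
  · left
    refine ⟨⟨i, hi⟩, rfl, ?_⟩
    rw [Equiv.symm_apply_eq]
    ext; simp
  · right
    have hlt : (i : ℕ) - k < m := by omega
    refine ⟨⟨(i : ℕ) - k, hlt⟩, by simp; omega, ?_⟩
    rw [Equiv.symm_apply_eq]
    ext; simp; omega

lemma extend {k m : ℕ} (hk : k ≤ 2)
    (B : Matrix (Fin k) (Fin k) ℝ) (hB : B.IsSymm)
    (w : Fin k → ℝ) (hw : ∀ i, w i = 1 ∨ w i = -1)
    (Td : Matrix (Fin m) (Fin m) ℝ) (hTd : Td.IsSymm)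
    (htri : ∀ i j : Fin m, ((i : ℕ) + 2 ≤ (j : ℕ) ∨ (j : ℕ) + 2 ≤ (i : ℕ)) → Td i j = 0)
    (v : Fin m → ℝ) (hv : ∀ i, v i = 1 ∨ v i = -1) :
    ∃ Td' : Matrix (Fin (k + m)) (Fin (k + m)) ℝ, Td'.IsSymm ∧
      (∀ i j : Fin (k + m), ((i : ℕ) + 2 ≤ (j : ℕ) ∨ (j : ℕ) + 2 ≤ (i : ℕ)) → Td' i j = 0) ∧
      ∃ v' : Fin (k + m) → ℝ, (∀ i, v' i = 1 ∨ v' i = -1) ∧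
        (∑ i, v' i) = (∑ i, w i) + (∑ i, v i) ∧
        Polynomial.C (Matrix.diagonal v').det *
            ((Polynomial.X : Polynomial ℝ) •
                (Matrix.diagonal v').map (Polynomial.C : ℝ →+* Polynomial ℝ)
              - Td'.map (Polynomial.C : ℝ →+* Polynomial ℝ)).det
          = (Polynomial.C (Matrix.diagonal w).det *
              ((Polynomial.X : Polynomial ℝ) •
                  (Matrix.diagonal w).map (Polynomial.C : ℝ →+* Polynomial ℝ)
                - B.map (Polynomial.C : ℝ →+* Polynomial ℝ)).det) *
            (Polynomial.C (Matrix.diagonal v).det *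
              ((Polynomial.X : Polynomial ℝ) •
                  (Matrix.diagonal v).map (Polynomial.C : ℝ →+* Polynomial ℝ)
                - Td.map (Polynomial.C : ℝ →+* Polynomial ℝ)).det) := by
  set e : Fin k ⊕ Fin m ≃ Fin (k + m) := finSumFinEquiv with he
  refine ⟨(Matrix.fromBlocks B 0 0 Td).submatrix e.symm e.symm, ?_, ?_,
    Sum.elim w v ∘ e.symm, ?_, ?_, ?_⟩
  · show _ = _
    rw [Matrix.transpose_submatrix, Matrix.fromBlocks_transpose]
    simp [hB.eq, hTd.eq]
  · intro i j hij
    rcases symm_cases i with ⟨a, ha, hea⟩ | ⟨a, ha, hea⟩ <;>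
      rcases symm_cases j with ⟨b, hb, heb⟩ | ⟨b, hb, heb⟩ <;>
      simp only [he, Matrix.submatrix_apply, hea, heb, Matrix.fromBlocks_apply₁₁,
        Matrix.fromBlocks_apply₁₂, Matrix.fromBlocks_apply₂₁, Matrix.fromBlocks_apply₂₂,
        Matrix.zero_apply]
    · exfalso; have := a.isLt; have := b.isLt; omega
    · apply htri; omega
  · intro i
    rcases symm_cases i with ⟨a, _, hea⟩ | ⟨a, _, hea⟩ <;> simp [he, hea, hw, hv]
  · have : ∑ i, (Sum.elim w v ∘ e.symm) i = ∑ x : Fin k ⊕ Fin m, Sum.elim w v x := by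
      exact Equiv.sum_comp e.symm (Sum.elim w v)
    rw [this, Fintype.sum_sum_type]; simp
  · have hdiag : Matrix.diagonal (Sum.elim w v ∘ e.symm)
        = (Matrix.fromBlocks (Matrix.diagonal w) 0 0 (Matrix.diagonal v)).submatrix e.symm e.symm := by
      rw [Matrix.fromBlocks_diagonal, Matrix.submatrix_diagonal _ _ e.symm.injective]
    have hM : (Polynomial.X : Polynomial ℝ) •
            (Matrix.diagonal (Sum.elim w v ∘ e.symm)).map (Polynomial.C : ℝ →+* Polynomial ℝ)
          - ((Matrix.fromBlocks B 0 0 Td).submatrix e.symm e.symm).map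
              (Polynomial.C : ℝ →+* Polynomial ℝ)
        = (Matrix.fromBlocks
            ((Polynomial.X : Polynomial ℝ) •
                (Matrix.diagonal w).map (Polynomial.C : ℝ →+* Polynomial ℝ)
              - B.map (Polynomial.C : ℝ →+* Polynomial ℝ)) 0 0
            ((Polynomial.X : Polynomial ℝ) •
                (Matrix.diagonal v).map (Polynomial.C : ℝ →+* Polynomial ℝ)
              - Td.map (Polynomial.C : ℝ →+* Polynomial ℝ))).submatrix e.symm e.symm := by
      rw [hdiag]
      funext i j
      simp only [Matrix.sub_apply, Matrix.smul_apply, Matrix.map_apply, Matrix.submatrix_apply]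
      cases h1 : e.symm i <;> cases h2 : e.symm j <;>
        simp only [h1, h2, Matrix.fromBlocks_apply₁₁, Matrix.fromBlocks_apply₁₂,
          Matrix.fromBlocks_apply₂₁, Matrix.fromBlocks_apply₂₂, Matrix.zero_apply,
          Matrix.sub_apply, Matrix.smul_apply, Matrix.map_apply, map_zero, smul_zero, sub_zero]
    rw [hM, Matrix.det_submatrix_equiv_self, Matrix.det_fromBlocks_zero₂₁,
      hdiag, Matrix.det_submatrix_equiv_self, Matrix.det_fromBlocks_zero₂₁, Polynomial.C_mul]
    ring

lemma block1 (r : ℝ) :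
    Polynomial.C ((Matrix.diagonal ![(1:ℝ)]).det) *
      ((Polynomial.X : Polynomial ℝ) •
          (Matrix.diagonal ![(1:ℝ)]).map (Polynomial.C : ℝ →+* Polynomial ℝ)
        - (Matrix.of ![![r]]).map (Polynomial.C : ℝ →+* Polynomial ℝ)).det
    = Polynomial.X - Polynomial.C r := by
  simp [Matrix.det_fin_one, Matrix.diagonal]

lemma block2 (a d : ℝ) :
    Polynomial.C ((Matrix.diagonal ![(1:ℝ), -1]).det) *
      ((Polynomial.X : Polynomial ℝ) •
          (Matrix.diagonal ![(1:ℝ), -1]).map (Polynomial.C : ℝ →+* Polynomial ℝ)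
        - (Matrix.of ![![a, d], ![d, -a]]).map (Polynomial.C : ℝ →+* Polynomial ℝ)).det
    = Polynomial.X ^ 2 - Polynomial.C (2 * a) * Polynomial.X + Polynomial.C (a ^ 2 + d ^ 2) := by
  simp [Matrix.det_fin_two, Matrix.diagonal, Fin.sum_univ_succ, Polynomial.C_add, Polynomial.C_mul, Polynomial.C_pow, map_neg, map_ofNat]
  ring

lemma quad_factor (p : Polynomial ℝ) (hp : p.Monic) (h1 : 1 ≤ p.natDegree)
    (hroots : p.roots = 0) :
    ∃ z : ℂ, z.im ≠ 0 ∧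
      (Polynomial.X ^ 2 - Polynomial.C (2 * z.re) * Polynomial.X
        + Polynomial.C (z.re ^ 2 + z.im ^ 2)) ∣ p := by
  have hinj : Function.Injective (algebraMap ℝ ℂ) := Complex.ofReal_injective
  set P := p.map (algebraMap ℝ ℂ) with hP
  have hPdeg : 0 < P.degree := by
    rw [Polynomial.degree_map_eq_of_injective hinj]
    exact Polynomial.natDegree_pos_iff_degree_pos.mp h1
  obtain ⟨z, hz⟩ := Complex.exists_root hPdeg
  have hnoroot : ∀ x : ℝ, ¬ p.IsRoot x := by
    intro x hx
    have : x ∈ p.roots := (Polynomial.mem_roots hp.ne_zero).mpr hx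
    rw [hroots] at this
    exact Multiset.notMem_zero x this
  have him : z.im ≠ 0 := by
    intro h0
    have hzre : z = ((z.re : ℝ) : ℂ) := Complex.ext rfl (by simp [h0])
    apply hnoroot z.re
    have h2 : P.eval (((z.re : ℝ) : ℂ)) = 0 := hzre ▸ hz
    rw [hP, Polynomial.eval_map] at h2
    have h3 : ((p.eval z.re : ℝ) : ℂ) = 0 := by
      show (algebraMap ℝ ℂ) (p.eval z.re) = 0
      rw [← Polynomial.eval₂_at_apply (algebraMap ℝ ℂ) z.re]
      exact h2
    exact_mod_cast h3
  have e1 : ∀ w : ℂ, P.eval w = (Polynomial.aeval w) p := fun w => by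
    rw [hP, Polynomial.eval_map, Polynomial.aeval_def]
  have hconj : P.IsRoot ((starRingEnd ℂ) z) := by
    rw [Polynomial.IsRoot, e1, Polynomial.aeval_conj, ← e1, hz, map_zero]
  have hne : z ≠ (starRingEnd ℂ) z := by
    intro h
    exact him (by simpa [Complex.conj_eq_iff_im] using h.symm)
  have hcop : IsCoprime (Polynomial.X - Polynomial.C z)
      (Polynomial.X - Polynomial.C ((starRingEnd ℂ) z)) :=
    Polynomial.isCoprime_X_sub_C_of_isUnit_sub ((sub_ne_zero.mpr hne).isUnit)
  have hdvd : (Polynomial.X - Polynomial.C z) * (Polynomial.X - Polynomial.C ((starRingEnd ℂ) z)) ∣ P :=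
    hcop.mul_dvd (Polynomial.dvd_iff_isRoot.mpr hz) (Polynomial.dvd_iff_isRoot.mpr hconj)
  have hmap : (Polynomial.X ^ 2 - Polynomial.C (2 * z.re) * Polynomial.X
        + Polynomial.C (z.re ^ 2 + z.im ^ 2)).map (algebraMap ℝ ℂ)
      = (Polynomial.X - Polynomial.C z) * (Polynomial.X - Polynomial.C ((starRingEnd ℂ) z)) := by
    have h1' : ((2 * z.re : ℝ) : ℂ) = z + (starRingEnd ℂ) z := (Complex.add_conj z).symm
    have h2' : ((z.re ^ 2 + z.im ^ 2 : ℝ) : ℂ) = z * (starRingEnd ℂ) z := by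
      rw [Complex.mul_conj]
      norm_cast
      simp [Complex.normSq_apply]; ring
    have ha : (algebraMap ℝ ℂ) (2 * z.re) = z + (starRingEnd ℂ) z := h1'
    have hb : (algebraMap ℝ ℂ) (z.re ^ 2 + z.im ^ 2) = z * (starRingEnd ℂ) z := h2'
    simp only [Polynomial.map_add, Polynomial.map_sub, Polynomial.map_pow, Polynomial.map_mul,
      Polynomial.map_X, Polynomial.map_C, ha, hb]
    rw [Polynomial.C_add, Polynomial.C_mul]
    ring
  refine ⟨z, him, ?_⟩
  rw [← Polynomial.map_dvd_map' (algebraMap ℝ ℂ), hmap]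
  exact hdvd

theorem key (n : ℕ) : ∀ (p : Polynomial ℝ), p.Monic → p.natDegree = n →
    ∃ Td : Matrix (Fin n) (Fin n) ℝ, Td.IsSymm ∧
      (∀ i j : Fin n, ((i : ℕ) + 2 ≤ (j : ℕ) ∨ (j : ℕ) + 2 ≤ (i : ℕ)) → Td i j = 0) ∧
      ∃ v : Fin n → ℝ, (∀ i, v i = 1 ∨ v i = -1) ∧
        (∑ i : Fin n, v i) = (p.roots.card : ℝ) ∧
        p = Polynomial.C (Matrix.diagonal v).det *
          ((Polynomial.X : Polynomial ℝ) •
              (Matrix.diagonal v).map (Polynomial.C : ℝ →+* Polynomial ℝ)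
            - Td.map (Polynomial.C : ℝ →+* Polynomial ℝ)).det := by
  induction n using Nat.strong_induction_on with
  | _ n IH =>
  intro p hp hdeg
  rcases Nat.eq_zero_or_pos n with hn0 | hn1
  · subst hn0
    have hp1 : p = 1 := hp.natDegree_eq_zero.mp hdeg
    subst hp1
    refine ⟨0, by simp [Matrix.IsSymm], fun i _ _ => i.elim0, fun _ => 1, fun i => i.elim0,
      by simp, by simp [Matrix.det_isEmpty]⟩
  by_cases hroots : p.roots = 0
  · -- no real roots: extract a quadratic factor
    obtain ⟨z, him, hgd⟩ := quad_factor p hp (by omega) hroots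
    set g : Polynomial ℝ := Polynomial.X ^ 2 - Polynomial.C (2 * z.re) * Polynomial.X
        + Polynomial.C (z.re ^ 2 + z.im ^ 2) with hg
    have hrepr : g = Polynomial.X ^ 2
        + (Polynomial.C (-(2 * z.re)) * Polynomial.X + Polynomial.C (z.re ^ 2 + z.im ^ 2)) := by
      rw [map_neg]; ring
    have hgm : g.Monic := by
      rw [hrepr]
      exact Polynomial.monic_X_pow_add (Polynomial.degree_linear_le.trans_lt (by norm_num))
    have hgdeg : g.natDegree = 2 := by
      apply Polynomial.natDegree_eq_of_degree_eq_some
      rw [hrepr]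
      rw [Polynomial.degree_add_eq_left_of_degree_lt, Polynomial.degree_X_pow]
      rw [Polynomial.degree_X_pow]
      exact Polynomial.degree_linear_le.trans_lt (by norm_num)
    obtain ⟨q, hq⟩ := hgd
    have hqm : q.Monic := hgm.of_mul_monic_left (hq ▸ hp)
    have hqroots : q.roots = 0 := by
      have : q.roots ≤ p.roots := Polynomial.roots.le_of_dvd hp.ne_zero ⟨g, by rw [hq]; ring⟩
      rw [hroots] at this
      exact Multiset.le_zero.mp this
    have hn2 : n = 2 + q.natDegree := by
      rw [← hdeg, hq, Polynomial.natDegree_mul hgm.ne_zero hqm.ne_zero, hgdeg]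
    subst hn2
    obtain ⟨Td, hTs, hTt, v, hv, hvsum, hveq⟩ := IH q.natDegree (by omega) q hqm rfl
    obtain ⟨Td', hs', ht', v', hv', hsum', heq'⟩ :=
      extend (k := 2) (m := q.natDegree) (by norm_num)
        (Matrix.of ![![z.re, z.im], ![z.im, -z.re]])
        (by show _ = _; ext i j; fin_cases i <;> fin_cases j <;> rfl)
        ![(1 : ℝ), -1] (by intro i; fin_cases i <;> simp)
        Td hTs hTt v hv
    refine ⟨Td', hs', ht', v', hv', ?_, ?_⟩
    · rw [hsum', hvsum, hroots, hqroots]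
      simp [Fin.sum_univ_succ]
    · rw [heq', block2 z.re z.im, ← hveq, ← hg, ← hq]
  · -- there is a real root
    obtain ⟨r, hr⟩ := Multiset.exists_mem_of_ne_zero hroots
    have hr' : p.IsRoot r := (Polynomial.mem_roots hp.ne_zero).mp hr
    obtain ⟨q, hq⟩ := Polynomial.dvd_iff_isRoot.mpr hr'
    have hqm : q.Monic := (Polynomial.monic_X_sub_C r).of_mul_monic_left (hq ▸ hp)
    have hn1' : n = 1 + q.natDegree := by
      rw [← hdeg, hq, Polynomial.natDegree_mul (Polynomial.X_sub_C_ne_zero r) hqm.ne_zero,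
        Polynomial.natDegree_X_sub_C]
    subst hn1'
    obtain ⟨Td, hTs, hTt, v, hv, hvsum, hveq⟩ := IH q.natDegree (by omega) q hqm rfl
    obtain ⟨Td', hs', ht', v', hv', hsum', heq'⟩ :=
      extend (k := 1) (m := q.natDegree) (by norm_num)
        (Matrix.of ![![r]])
        (by show _ = _; ext i j; fin_cases i <;> fin_cases j <;> rfl)
        ![(1 : ℝ)] (by intro i; fin_cases i <;> simp)
        Td hTs hTt v hv
    have hprc : p.roots = {r} + q.roots := by
      rw [hq, Polynomial.roots_mul (by rw [← hq]; exact hp.ne_zero), Polynomial.roots_X_sub_C]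
    refine ⟨Td', hs', ht', v', hv', ?_, ?_⟩
    · rw [hsum', hvsum, hprc]
      simp [Fin.sum_univ_succ]
      ring
    · rw [heq', block1 r, ← hveq, ← hq]
/-- Let `p` be a monic real polynomial of degree `n` having exactly `s` real roots
counted with multiplicity.  Then there exist a symmetric tridiagonal matrix
`Td ∈ ℝ^{n×n}` and a signature matrix `J = diagonal v` with `sgn(J) = s` such that
`p(x) = det(J)·det(x·J − Td)`. -/
theorem stmt_19 (n : ℕ) (hn : 1 ≤ n) (p : Polynomial ℝ)
    (hp : p.Monic) (hpdeg : p.natDegree = n)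
    (s : ℕ) (hs : p.roots.card = s) :
    ∃ Td : Matrix (Fin n) (Fin n) ℝ, Td.IsSymm ∧
      (∀ i j : Fin n, ((i : ℕ) + 2 ≤ (j : ℕ) ∨ (j : ℕ) + 2 ≤ (i : ℕ)) → Td i j = 0) ∧
      ∃ v : Fin n → ℝ, (∀ i, v i = 1 ∨ v i = -1) ∧ (∑ i : Fin n, v i) = (s : ℝ) ∧
        p = Polynomial.C (Matrix.diagonal v).det *
          ((Polynomial.X : Polynomial ℝ) •
              (Matrix.diagonal v).map (Polynomial.C : ℝ →+* Polynomial ℝ)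
            - Td.map (Polynomial.C : ℝ →+* Polynomial ℝ)).det := by
  obtain ⟨Td, h1, h2, v, h3, h4, h5⟩ := key n p hp hpdeg
  exact ⟨Td, h1, h2, v, h3, by rw [h4, hs], h5⟩
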